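/- Let G = A₁ ∗_C A₋₁ be the amalgamated free product of A₁ and A₋₁ along a common subgroup C. Let x, y ∈ G have reduced forms x = u₁u₂…u_k and y = v₁…v_s, and suppose the last syllable v_s of y lies in Aᵢ − C (i.e. y ends in Aᵢ). Then the product xy ends in Aᵢ, unless y⁻¹ is a right segment of x. -/

import Mathlib

universe u v w

section Defs

variable {G : Type u} [Group G]

/-- A finite generating set closed under inversion. -/
def IsSymmGen (X : Set G) : Prop :=
  X.Finite ∧ (∀ x ∈ X, x⁻¹ ∈ X) ∧ Subgroup.closure X = ⊤

/-- Word length of `g` with respect to `X`. -/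
noncomputable def wordLength (X : Set G) (g : G) : ℕ :=
  sInf {n : ℕ | ∃ l : List G, l.length = n ∧ (∀ x ∈ l, x ∈ X) ∧ l.prod = g}

/-- Word metric. -/
noncomputable def wordDist (X : Set G) (g h : G) : ℕ :=
  wordLength X (g⁻¹ * h)

/-- Gromov product with respect to the word metric. -/
noncomputable def gromovProd (X : Set G) (x y w : G) : ℝ :=
  ((wordDist X x w : ℝ) + (wordDist X y w : ℝ) - (wordDist X x y : ℝ)) / 2

end Defs

/-- A group is word hyperbolic if for some finite symmetric generating set the Gromov
product satisfies the hyperbolicity inequality. -/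
def IsWordHyperbolic (G : Type u) [Group G] : Prop :=
  ∃ X : Set G, IsSymmGen X ∧ ∃ δ : ℝ, 0 ≤ δ ∧
    ∀ x y z w : G,
      gromovProd X x z w ≥ min (gromovProd X x y w) (gromovProd X y z w) - δ

/-- A subgroup is quasiconvex: it is finitely generated and word lengths distort linearly. -/
def IsQuasiconvex {G : Type u} [Group G] (A : Subgroup G) : Prop :=
  ∃ Y : Set ↥A, IsSymmGen Y ∧ ∃ X : Set G, IsSymmGen X ∧ ∃ c : ℝ, 0 < c ∧
    ∀ a : ↥A, (wordLength Y a : ℝ) ≤ c * (wordLength X (a : G) : ℝ) + c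

/-- Property (Q): every finitely generated subgroup is quasiconvex. -/
def HasPropertyQ (G : Type u) [Group G] : Prop :=
  ∀ H : Subgroup G, H.FG → IsQuasiconvex H

/-- A group is virtually cyclic if it has a cyclic subgroup of finite index. -/
def IsVirtuallyCyclic (C : Type u) [Group C] : Prop :=
  ∃ Z : Subgroup C, IsCyclic ↥Z ∧ Z.FiniteIndex

/-- `G` is the amalgamated free product of its subgroups `A` and `B` along `C`:
`C = A ⊓ B`, `A ⊔ B = ⊤` and `G` has the pushout universal property. -/
structure IsAmalgamatedFreeProduct {G : Type u} [Group G] (A B C : Subgroup G) : Prop where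
  le_left : C ≤ A
  le_right : C ≤ B
  inf_eq : A ⊓ B = C
  sup_eq_top : A ⊔ B = ⊤
  univ : ∀ (K : Type u) [Group K] (f : ↥A →* K) (g : ↥B →* K),
    (∀ (c : G) (hA : c ∈ A) (hB : c ∈ B), f ⟨c, hA⟩ = g ⟨c, hB⟩) →
    ∃ h : G →* K, (∀ a : ↥A, h a = f a) ∧ (∀ b : ↥B, h b = g b)

section Words

variable {G : Type u} [Group G]

/-- A word over the alphabet `X`. -/
def IsWordOver (X : Set G) (l : List G) : Prop := ∀ x ∈ l, x ∈ X

/-- A geodesic word over `X`. -/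
def IsGeodesicWord (X : Set G) (l : List G) : Prop :=
  IsWordOver X l ∧ l.length = wordLength X l.prod

/-- A `lam`-quasigeodesic word over `X`: every subword `v` satisfies
`l(v) ≤ lam * l_X(v̄) + lam`. -/
def IsQuasigeodesicWord (X : Set G) (lam : ℝ) (l : List G) : Prop :=
  IsWordOver X l ∧
    ∀ v : List G, v <:+: l → (v.length : ℝ) ≤ lam * (wordLength X v.prod : ℝ) + lam

/-- `g` is a shortest element of the subset `S` with respect to `wordLength X`. -/
def ShortestIn (X : Set G) (g : G) (S : Set G) : Prop :=
  g ∈ S ∧ ∀ s ∈ S, wordLength X g ≤ wordLength X s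

end Words

/-- `G` together with `ια, ιβ` is the pushout of `ℤ → A, 1 ↦ x` and `ℤ → B, 1 ↦ y`. -/
structure IsAmalgamOverZ {A : Type u} {B : Type v} {G : Type w}
    [Group A] [Group B] [Group G]
    (ια : A →* G) (ιβ : B →* G) (x : A) (y : B) : Prop where
  comm : ια x = ιβ y
  gen : ια.range ⊔ ιβ.range = ⊤
  univ : ∀ (K : Type (max u v w)) [Group K] (f : A →* K) (g : B →* K),
    f x = g y → ∃ h : G →* K, h.comp ια = f ∧ h.comp ιβ = g

variable {G : Type u} [Group G]

/-- A reduced form in the amalgam `A true ∗_C A false`: every syllable lies in a factor,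
all syllables except possibly the last lie outside `C`, and consecutive syllables lie in
different factors. -/
def IsReducedForm (A : Bool → Subgroup G) (C : Subgroup G) (l : List G) : Prop :=
  (∀ x ∈ l, x ∈ A true ∨ x ∈ A false) ∧
  (∀ i, i + 1 < l.length → l.getD i 1 ∉ C) ∧
  (∀ i, i + 1 < l.length → ∀ b : Bool, l.getD i 1 ∈ A b → l.getD (i + 1) 1 ∉ A b)

/-- `g` ends in the factor `A i`: it has a reduced form whose last syllable is in
`A i − C`. -/
def EndsIn (A : Bool → Subgroup G) (C : Subgroup G) (i : Bool) (g : G) : Prop :=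
  ∃ l : List G, IsReducedForm A C l ∧ l.prod = g ∧
    ∃ z : G, l.getLast? = some z ∧ z ∈ A i ∧ z ∉ C

/-- `y` is a right segment of `x`: for reduced forms `lx` of `x` and `ly` of `y` with
`ly` no longer than `lx`, the product of the last `ly.length` syllables of `lx` agrees
with `y` modulo `C`. -/
def IsRightSegmentOf (A : Bool → Subgroup G) (C : Subgroup G) (y x : G) : Prop :=
  ∃ lx ly : List G, IsReducedForm A C lx ∧ IsReducedForm A C ly ∧
    lx.prod = x ∧ ly.prod = y ∧ ly.length ≤ lx.length ∧
    (lx.drop (lx.length - ly.length)).prod * y⁻¹ ∈ C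


private lemma getD_eq' {l : List G} {i : ℕ} (h : i < l.length) : l.getD i 1 = l[i] := by
  simp [List.getD_eq_getElem?_getD, List.getElem?_eq_getElem h]

private lemma mem_of_getLast?' {l : List G} {z : G} (hz : l.getLast? = some z) : z ∈ l := by
  obtain ⟨h, rfl⟩ := List.mem_getLast?_eq_getLast (show z ∈ l.getLast? from hz)
  exact List.getLast_mem h

/-- Characterization of reduced forms via `Chain'`. -/
lemma isReducedForm_iff' (A : Bool → Subgroup G) (C : Subgroup G) (l : List G) :
    IsReducedForm A C l ↔ (∀ x ∈ l, x ∈ A true ∨ x ∈ A false) ∧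
      (∀ x ∈ l.dropLast, x ∉ C) ∧
      l.Chain' (fun x y => ∀ b : Bool, x ∈ A b → y ∉ A b) := by
  constructor
  · rintro ⟨h1, h2, h3⟩
    refine ⟨h1, ?_, ?_⟩
    · intro x hx
      obtain ⟨n, hn, rfl⟩ := List.mem_iff_getElem.1 hx
      rw [List.getElem_dropLast]
      have hn' : n + 1 < l.length := by
        have := hn; rw [List.length_dropLast] at this; omega
      have := h2 n hn'
      rwa [getD_eq' (by omega)] at this
    · show List.IsChain _ l
      rw [List.isChain_iff_getElem]
      intro n hn b hb
      have hn' : n + 1 < l.length := by omega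
      have := h3 n hn' b
      rw [getD_eq' (by omega), getD_eq' (by omega)] at this
      exact this hb
  · rintro ⟨h1, h2, h3⟩
    refine ⟨h1, ?_, ?_⟩
    · intro n hn
      rw [getD_eq' (by omega)]
      refine h2 _ (List.mem_iff_getElem.2 ⟨n, ?_, ?_⟩)
      · rw [List.length_dropLast]; omega
      · rw [List.getElem_dropLast]
    · intro n hn b
      rw [getD_eq' (by omega), getD_eq' (by omega)]
      exact List.isChain_iff_getElem.1 h3 n (by omega) b

section LemB

variable {A : Bool → Subgroup G} {C : Subgroup G}

private lemma factor_eq' (hinf : ∀ w : G, w ∈ A true → w ∈ A false → w ∈ C)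
    {w : G} {b c : Bool} (hwC : w ∉ C) (hb : w ∈ A b) (hc : w ∈ A c) : b = c := by
  cases b <;> cases c
  · rfl
  · exact absurd (hinf w hc hb) hwC
  · exact absurd (hinf w hb hc) hwC
  · rfl

private lemma lemB (hle : ∀ b, C ≤ A b)
    (hinf : ∀ w : G, w ∈ A true → w ∈ A false → w ∈ C) :
    ∀ lx : List G, (∀ x ∈ lx, x ∈ A true ∨ x ∈ A false) →
      (∀ x ∈ lx.dropLast, x ∉ C) →
      lx.Chain' (fun x y => ∀ b : Bool, x ∈ A b → y ∉ A b) →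
    ∀ (ly : List G) (i : Bool),
      (∀ x ∈ ly, (x ∈ A true ∨ x ∈ A false) ∧ x ∉ C) →
      ly.Chain' (fun x y => ∀ b : Bool, x ∈ A b → y ∉ A b) →
      (∃ z, ly.getLast? = some z ∧ z ∈ A i) →
      EndsIn A C i (lx.prod * ly.prod) ∨
        ∃ m < lx.length, (lx.drop m).prod * ly.prod ∈ C := by
  intro lx
  induction lx using List.reverseRecOn with
  | nil =>
    rintro _ _ _ ly i hly hlyc ⟨z, hz, hzi⟩
    left
    refine ⟨ly, (isReducedForm_iff' A C ly).2
      ⟨fun x hx => (hly x hx).1, fun x hx => (hly x ((ly.dropLast_sublist).subset hx)).2,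
        hlyc⟩, by simp, z, hz, hzi, (hly z (mem_of_getLast?' hz)).2⟩
  | append_singleton L u IH =>
    rintro hmem hC hchain0 ly i hly hlyc ⟨z, hz, hzi⟩
    cases ly with
    | nil => simp at hz
    | cons v ys =>
    have hmemL : ∀ x ∈ L, x ∈ A true ∨ x ∈ A false := fun x hx => hmem x (by simp [hx])
    have hu_or : u ∈ A true ∨ u ∈ A false := hmem u (by simp)
    have hCL' : ∀ x ∈ L, x ∉ C := by
      intro x hx; exact hC x (by rwa [List.dropLast_concat])
    have hCL : ∀ x ∈ L.dropLast, x ∉ C := fun x hx => hCL' x ((L.dropLast_sublist).subset hx)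
    obtain ⟨hcL, -, hjunc⟩ := List.isChain_append.1 hchain0
    have hjR : ∀ p ∈ L.getLast?, ∀ b : Bool, p ∈ A b → u ∉ A b := by
      intro p hp; exact hjunc p hp u rfl
    obtain ⟨hv_or, hvC⟩ := hly v (List.mem_cons_self)
    obtain ⟨hvhead, hysc⟩ := List.isChain_cons.1 hlyc
    -- generic "absorb a C-element c into the head of a nonempty list" step
    have absorb : ∀ c ∈ C, ∀ (w : G) (ws : List G),
        (∀ x ∈ w :: ws, (x ∈ A true ∨ x ∈ A false) ∧ x ∉ C) →
        (w :: ws).Chain' (fun x y => ∀ b : Bool, x ∈ A b → y ∉ A b) →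
        (∃ z', (w :: ws).getLast? = some z' ∧ z' ∈ A i) →
        (∀ x ∈ (c * w) :: ws, (x ∈ A true ∨ x ∈ A false) ∧ x ∉ C) ∧
        ((c * w) :: ws).Chain' (fun x y => ∀ b : Bool, x ∈ A b → y ∉ A b) ∧
        (∃ z', ((c * w) :: ws).getLast? = some z' ∧ z' ∈ A i) := by
      rintro c hc w ws hmemw hchw ⟨z', hz', hz'i⟩
      obtain ⟨hw_or, hwC⟩ := hmemw w (List.mem_cons_self)
      have hwiff : ∀ b : Bool, c * w ∈ A b ↔ w ∈ A b := by
        intro b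
        constructor
        · intro h; simpa using mul_mem (inv_mem (hle b hc)) h
        · intro h; exact mul_mem (hle b hc) h
      refine ⟨?_, ?_, ?_⟩
      · intro x hx
        rcases List.mem_cons.1 hx with rfl | hx
        · refine ⟨?_, ?_⟩
          · rcases hw_or with h | h
            · exact Or.inl ((hwiff true).2 h)
            · exact Or.inr ((hwiff false).2 h)
          · intro h
            exact hwC (by simpa using mul_mem (inv_mem hc) h)
        · exact hmemw x (List.mem_cons_of_mem _ hx)
      · obtain ⟨hwhead, hwsc⟩ := List.isChain_cons.1 hchw
        exact List.isChain_cons.2 ⟨fun y hy b hb => hwhead y hy b ((hwiff b).1 hb), hwsc⟩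
      · cases ws with
        | nil =>
          simp only [List.getLast?_singleton, Option.some.injEq] at hz' ⊢
          exact ⟨c * w, rfl, (hwiff i).2 (hz' ▸ hz'i)⟩
        | cons w₂ rest =>
          rw [List.getLast?_cons_cons] at hz' ⊢
          exact ⟨z', hz', hz'i⟩
    by_cases hu : u ∈ C
    · -- absorb u into head of ly
      obtain ⟨hm2, hc2, hl2⟩ := absorb u hu v ys hly hlyc ⟨z, hz, hzi⟩
      rcases IH hmemL hCL hcL ((u * v) :: ys) i hm2 hc2 hl2 with hsucc | ⟨m, hm, hmem2⟩
      · left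
        have : (L ++ [u]).prod * (v :: ys).prod = L.prod * ((u * v) :: ys).prod := by
          simp [mul_assoc]
        rwa [this]
      · right
        refine ⟨m, by simp; omega, ?_⟩
        rw [List.drop_append_of_le_length (by omega), List.prod_append]
        have : (L.drop m).prod * [u].prod * (v :: ys).prod
            = (L.drop m).prod * ((u * v) :: ys).prod := by simp [mul_assoc]
        rw [this]; exact hmem2
    · obtain ⟨b, hub⟩ : ∃ b, u ∈ A b := by
        rcases hu_or with h | h
        · exact ⟨true, h⟩
        · exact ⟨false, h⟩
      by_cases hvb : v ∈ A b
      · -- same factor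
        set w := u * v with hw_def
        have hwb : w ∈ A b := mul_mem hub hvb
        by_cases hw : w ∈ C
        · cases ys with
          | nil =>
            right
            refine ⟨L.length, by simp, ?_⟩
            rw [List.drop_left]
            simpa using hw
          | cons v₂ rest =>
            obtain ⟨hvhead2, hrestc⟩ := List.isChain_cons.1 hysc
            obtain ⟨hm2, hc2, hl2⟩ := absorb w hw v₂ rest
              (fun x hx => hly x (List.mem_cons_of_mem _ hx)) hysc
              (by
                refine ⟨z, ?_, hzi⟩
                rwa [List.getLast?_cons_cons] at hz)
            rcases IH hmemL hCL hcL ((w * v₂) :: rest) i hm2 hc2 hl2 with hsucc | ⟨m, hm, hmem2⟩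
            · left
              have : (L ++ [u]).prod * (v :: v₂ :: rest).prod
                  = L.prod * ((w * v₂) :: rest).prod := by
                simp [hw_def, mul_assoc]
              rwa [this]
            · right
              refine ⟨m, by simp; omega, ?_⟩
              rw [List.drop_append_of_le_length (by omega), List.prod_append]
              have : (L.drop m).prod * [u].prod * (v :: v₂ :: rest).prod
                  = (L.drop m).prod * ((w * v₂) :: rest).prod := by
                simp [hw_def, mul_assoc]
              rw [this]; exact hmem2
        · -- w ∉ C : success with L ++ (w :: ys)
          left
          refine ⟨L ++ w :: ys, (isReducedForm_iff' A C _).2 ⟨?_, ?_, ?_⟩, ?_, ?_⟩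
          · intro x hx
            rcases List.mem_append.1 hx with hx | hx
            · exact hmemL x hx
            · rcases List.mem_cons.1 hx with rfl | hx
              · cases b
                · exact Or.inr hwb
                · exact Or.inl hwb
              · exact (hly x (List.mem_cons_of_mem _ hx)).1
          · rw [List.dropLast_append_of_ne_nil (by simp)]
            intro x hx
            rcases List.mem_append.1 hx with hx | hx
            · exact hCL' x hx
            · have hx' : x ∈ w :: ys := (List.dropLast_sublist _).subset hx
              rcases List.mem_cons.1 hx' with rfl | hx'
              · exact hw
              · exact (hly x (List.mem_cons_of_mem _ hx')).2
          · refine List.isChain_append.2 ⟨hcL, ?_, ?_⟩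
            · refine List.isChain_cons.2 ⟨?_, hysc⟩
              intro y hy c hwc
              have : b = c := factor_eq' hinf hw hwb hwc
              exact this ▸ hvhead y hy b hvb
            · intro p hp y hy c hpc hyc
              simp only [List.head?_cons, Option.mem_def, Option.some.injEq] at hy
              subst hy
              have : b = c := factor_eq' hinf hw hwb hyc
              exact hjR p hp c hpc (this ▸ hub)
          · simp [hw_def, mul_assoc]
          · cases ys with
            | nil =>
              refine ⟨w, List.getLast?_concat, ?_, hw⟩
              have hzv : z = v := by simpa using hz.symm
              have : b = i := factor_eq' hinf hvC hvb (hzv ▸ hzi)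
              exact this ▸ hwb
            | cons v₂ rest =>
              refine ⟨z, ?_, hzi, (hly z (mem_of_getLast?' hz)).2⟩
              rw [List.getLast?_append, List.getLast?_cons_cons]
              rw [List.getLast?_cons_cons] at hz
              simp [hz]
      · -- different factors: success with (L ++ [u]) ++ (v :: ys)
        left
        refine ⟨(L ++ [u]) ++ v :: ys, (isReducedForm_iff' A C _).2 ⟨?_, ?_, ?_⟩, ?_, ?_⟩
        · intro x hx
          rcases List.mem_append.1 hx with hx | hx
          · exact hmem x hx
          · exact (hly x hx).1
        · rw [List.dropLast_append_of_ne_nil (by simp)]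
          intro x hx
          rcases List.mem_append.1 hx with hx | hx
          · rcases List.mem_append.1 hx with hx | hx
            · exact hCL' x hx
            · simp only [List.mem_singleton] at hx
              exact hx ▸ hu
          · exact (hly x ((List.dropLast_sublist _).subset hx)).2
        · refine List.isChain_append.2 ⟨hchain0, hlyc, ?_⟩
          intro p hp y hy c hpc hyc
          rw [List.getLast?_concat] at hp
          simp only [List.head?_cons, Option.mem_def, Option.some.injEq] at hp hy
          subst hp; subst hy
          have : b = c := factor_eq' hinf hu hub hpc
          exact hvb (this ▸ hyc)
        · simp [mul_assoc]
        · refine ⟨z, ?_, hzi, (hly z (mem_of_getLast?' hz)).2⟩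
          rw [List.getLast?_append, hz]
          rfl

end LemB

private lemma reduced_drop {A : Bool → Subgroup G} {C : Subgroup G} {l : List G}
    (h : IsReducedForm A C l) (m : ℕ) : IsReducedForm A C (l.drop m) := by
  obtain ⟨h1, h2, h3⟩ := h
  refine ⟨fun x hx => h1 x ((List.drop_sublist m l).subset hx), ?_, ?_⟩
  · intro i hi
    rw [List.length_drop] at hi
    rw [getD_eq' (by rw [List.length_drop]; omega), List.getElem_drop,
      ← getD_eq' (show m + i < l.length by omega)]
    exact h2 (m + i) (by omega)
  · intro i hi b
    rw [List.length_drop] at hi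
    rw [getD_eq' (by rw [List.length_drop]; omega), List.getElem_drop,
      getD_eq' (by rw [List.length_drop]; omega), List.getElem_drop,
      ← getD_eq' (show m + i < l.length by omega),
      ← getD_eq' (show m + (i + 1) < l.length by omega)]
    have := h3 (m + i) (by omega) b
    rwa [show m + i + 1 = m + (i + 1) by omega] at this

private lemma reduced_cons_absorb {A : Bool → Subgroup G} {C : Subgroup G}
    (hle : ∀ b, C ≤ A b) {c w : G} {ws : List G} (hc : c ∈ C)
    (h : IsReducedForm A C (w :: ws)) : IsReducedForm A C ((c * w) :: ws) := by
  obtain ⟨h1, h2, h3⟩ := h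
  have hwiff : ∀ b : Bool, c * w ∈ A b ↔ w ∈ A b := by
    intro b
    constructor
    · intro hh; simpa using mul_mem (inv_mem (hle b hc)) hh
    · intro hh; exact mul_mem (hle b hc) hh
  refine ⟨?_, ?_, ?_⟩
  · intro x hx
    rcases List.mem_cons.1 hx with rfl | hx
    · rcases h1 w (List.mem_cons_self) with hh | hh
      · exact Or.inl ((hwiff true).2 hh)
      · exact Or.inr ((hwiff false).2 hh)
    · exact h1 x (List.mem_cons_of_mem _ hx)
  · intro i hi
    simp only [List.length_cons] at hi
    cases i with
    | zero =>
      rw [List.getD_cons_zero]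
      intro hh
      exact h2 0 (by simpa using hi) (by
        rw [List.getD_cons_zero]
        simpa using mul_mem (inv_mem hc) hh)
    | succ n =>
      rw [List.getD_cons_succ]
      have := h2 (n + 1) (by simpa using hi)
      rwa [List.getD_cons_succ] at this
  · intro i hi b
    simp only [List.length_cons] at hi
    cases i with
    | zero =>
      rw [List.getD_cons_zero, List.getD_cons_succ]
      intro hh
      have := h3 0 (by simpa using hi) b
      rw [List.getD_cons_zero, List.getD_cons_succ] at this
      exact this ((hwiff b).1 hh)
    | succ n =>
      rw [List.getD_cons_succ, List.getD_cons_succ]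
      have := h3 (n + 1) (by simpa using hi) b
      rwa [List.getD_cons_succ, List.getD_cons_succ] at this
/-- **Lemma 1.4.** If `y` ends in `A i`, then `x * y` ends in `A i` unless `y⁻¹` is a right
segment of `x`. -/
theorem mul_endsIn_of_not_rightSegment
    (A : Bool → Subgroup G) (C : Subgroup G)
    (amal : IsAmalgamatedFreeProduct (A true) (A false) C)
    (x y : G) (lx ly : List G)
    (hlx : IsReducedForm A C lx) (hxprod : lx.prod = x)
    (hly : IsReducedForm A C ly) (hyprod : ly.prod = y)
    (i : Bool) (z : G) (hz : ly.getLast? = some z) (hzA : z ∈ A i) (hzC : z ∉ C)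
    (hnot : ¬ IsRightSegmentOf A C y⁻¹ x) :
    EndsIn A C i (x * y) := by

  have hle : ∀ b : Bool, C ≤ A b := by
    intro b
    cases b
    · exact amal.le_right
    · exact amal.le_left
  have hinf : ∀ w : G, w ∈ A true → w ∈ A false → w ∈ C := by
    intro w h1 h2
    have : w ∈ A true ⊓ A false := ⟨h1, h2⟩
    rwa [amal.inf_eq] at this
  obtain ⟨hm1, hm2, hm3⟩ := (isReducedForm_iff' A C lx).1 hlx
  obtain ⟨hy1, hy2, hy3⟩ := (isReducedForm_iff' A C ly).1 hly
  have hlyne : ly ≠ [] := by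
    intro h; rw [h] at hz; simp at hz
  have hlyAll : ∀ w ∈ ly, (w ∈ A true ∨ w ∈ A false) ∧ w ∉ C := by
    intro w hw
    refine ⟨hy1 w hw, ?_⟩
    have heq : ly.dropLast ++ [ly.getLast hlyne] = ly := List.dropLast_append_getLast hlyne
    rw [← heq] at hw
    rcases List.mem_append.1 hw with h | h
    · exact hy2 w h
    · have : w = ly.getLast hlyne := by simpa using h
      rw [List.getLast?_eq_getLast_of_ne_nil hlyne] at hz
      have hzz : ly.getLast hlyne = z := by simpa using hz
      rw [this, hzz]
      exact hzC
  rcases lemB hle hinf lx hm1 hm2 hm3 ly i hlyAll hy3 ⟨z, hz, hzA⟩ with hs | ⟨m, hm, hd⟩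
  · rwa [hxprod, hyprod] at hs
  · exfalso
    apply hnot
    rw [hyprod] at hd
    have htred : IsReducedForm A C (lx.drop m) := reduced_drop hlx m
    have htlen : (lx.drop m).length = lx.length - m := List.length_drop
    have htne : lx.drop m ≠ [] := by
      intro h
      have := congrArg List.length h
      rw [htlen] at this
      simp at this
      omega
    obtain ⟨h, ts, hts⟩ : ∃ h ts, lx.drop m = h :: ts := by
      cases hcase : lx.drop m with
      | nil => exact absurd hcase htne
      | cons a l => exact ⟨a, l, rfl⟩
    set d : G := (lx.drop m).prod * y with hd_def
    have hLYred : IsReducedForm A C ((d⁻¹ * h) :: ts) := by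
      refine reduced_cons_absorb hle (inv_mem hd) ?_
      rwa [hts] at htred
    refine ⟨lx, (d⁻¹ * h) :: ts, hlx, hLYred, hxprod, ?_, ?_, ?_⟩
    · have hpt : (lx.drop m).prod = h * ts.prod := by rw [hts]; simp
      rw [List.prod_cons]
      rw [hd_def, hpt]
      group
    · have : ((d⁻¹ * h) :: ts).length = lx.length - m := by
        rw [← htlen, hts]; simp
      rw [this]
      omega
    · have hlen : ((d⁻¹ * h) :: ts).length = lx.length - m := by
        rw [← htlen, hts]; simp
      rw [hlen, inv_inv]
      have : lx.length - (lx.length - m) = m := by omega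
      rw [this]
      exact hd
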